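/- Let Λ(a, b, ā, b̄) be the free graded-commutative algebra on degree-1 generators with bidegrees |a| = |b| = (1,0), |ā| = |b̄| = (0,1), and differential determined as a derivation by da = dā = 0 and db = (1/2i)(āb̄) + (1/2i)(ab̄ - bā) - i aā + (1/2i)(ab), db̄ = conjugate. For this complex (dual Chevalley-Eilenberg algebra of the filiform Lie algebra with the given J), the Dolbeault cohomology H^{q}(H_μ̄^{p,*}, ∂̄) has dimensions h^{0,0} = 1, h^{1,0} = 1, h^{2,0} = 0, h^{0,1} = 2, h^{1,1} = 4, h^{2,1} = 2, h^{0,2} = 0, h^{1,2} = 1, h^{2,2} = 1. -/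

import Mathlib

/-- The free graded-commutative algebra `Λ(a,b,ā,b̄)` modelled as the exterior algebra on
four generators `a = g 0, b = g 1, ā = g 2, b̄ = g 3` of bidegrees `(1,0),(1,0),(0,1),(0,1)`. -/
abbrev FilAlg : Type := ExteriorAlgebra ℂ (Fin 4 → ℂ)

noncomputable def gFil (i : Fin 4) : FilAlg :=
  ExteriorAlgebra.ι ℂ (Pi.single i 1)

/-- The bigraded pieces `A^{p,q}` of `Λ(a,b,ā,b̄)`. -/
noncomputable def AFil (p q : ℤ) : Submodule ℂ FilAlg :=
  if p = 0 ∧ q = 0 then Submodule.span ℂ {1}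
  else if p = 1 ∧ q = 0 then Submodule.span ℂ {gFil 0, gFil 1}
  else if p = 0 ∧ q = 1 then Submodule.span ℂ {gFil 2, gFil 3}
  else if p = 2 ∧ q = 0 then Submodule.span ℂ {gFil 0 * gFil 1}
  else if p = 1 ∧ q = 1 then
    Submodule.span ℂ {gFil 0 * gFil 2, gFil 0 * gFil 3, gFil 1 * gFil 2, gFil 1 * gFil 3}
  else if p = 0 ∧ q = 2 then Submodule.span ℂ {gFil 2 * gFil 3}
  else if p = 2 ∧ q = 1 then
    Submodule.span ℂ {gFil 0 * gFil 1 * gFil 2, gFil 0 * gFil 1 * gFil 3}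
  else if p = 1 ∧ q = 2 then
    Submodule.span ℂ {gFil 0 * gFil 2 * gFil 3, gFil 1 * gFil 2 * gFil 3}
  else if p = 2 ∧ q = 2 then Submodule.span ℂ {gFil 0 * gFil 1 * gFil 2 * gFil 3}
  else ⊥

/-- Dolbeault cocycles: `ω ∈ A^{p,q} ∩ Ker μ̄` with `∂̄ω ∈ μ̄(A^{p+1,q-1})`. -/
noncomputable def ZFil (mub delb : FilAlg →ₗ[ℂ] FilAlg) (p q : ℤ) : Submodule ℂ FilAlg :=
  AFil p q ⊓ LinearMap.ker mub ⊓ Submodule.comap delb ((AFil (p + 1) (q - 1)).map mub)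

/-- Dolbeault coboundaries: `μ̄α + ∂̄β` with `α ∈ A^{p+1,q-2}`, `β ∈ A^{p,q-1}`, `μ̄β = 0`. -/
noncomputable def BFil (mub delb : FilAlg →ₗ[ℂ] FilAlg) (p q : ℤ) : Submodule ℂ FilAlg :=
  (AFil (p + 1) (q - 2)).map mub ⊔ ((AFil p (q - 1) ⊓ LinearMap.ker mub)).map delb

/-- Dolbeault numbers `h^{p,q} = dim H^q(H_μ̄^{p,*}, ∂̄)`. -/
noncomputable def hFil (mub delb : FilAlg →ₗ[ℂ] FilAlg) (p q : ℤ) : ℕ :=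
  Module.finrank ℂ
    (↥(ZFil mub delb p q) ⧸
      Submodule.comap (ZFil mub delb p q).subtype (BFil mub delb p q))

open ExteriorAlgebra Submodule Module

noncomputable def altD (k : ℕ) (σ : Fin k → Fin 4) : ((Fin 4 → ℂ) [⋀^Fin k]→ₗ[ℂ] ℂ) :=
  Matrix.detRowAlternating.compLinearMap (LinearMap.funLeft ℂ ℂ σ)

noncomputable def Ffun (k : ℕ) (σ : Fin k → Fin 4) : FilAlg →ₗ[ℂ] ℂ :=
  liftAlternating (fun i => if h : i = k then h ▸ altD k σ else 0)

lemma Ffun_ιMulti (k : ℕ) (σ : Fin k → Fin 4) (v : Fin k → (Fin 4 → ℂ)) :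
    Ffun k σ (ιMulti ℂ k v) = Matrix.det (Matrix.of fun r c => v r (σ c)) := by
  rw [Ffun, liftAlternating_apply_ιMulti, dif_pos rfl]
  rfl

lemma Ffun_mono2 (σ : Fin 2 → Fin 4) (v : Fin 2 → (Fin 4 → ℂ)) :
    Ffun 2 σ (ExteriorAlgebra.ι ℂ (v 0) * ExteriorAlgebra.ι ℂ (v 1)) =
      v 0 (σ 0) * v 1 (σ 1) - v 0 (σ 1) * v 1 (σ 0) := by
  have h : ιMulti ℂ 2 v = ExteriorAlgebra.ι ℂ (v 0) * ExteriorAlgebra.ι ℂ (v 1) := by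
    rw [ιMulti_apply]
    simp [List.ofFn_succ]
  rw [← h, Ffun_ιMulti, Matrix.det_fin_two]
  rfl

lemma Ffun_mono1 (σ : Fin 1 → Fin 4) (v : Fin 1 → (Fin 4 → ℂ)) :
    Ffun 1 σ (ExteriorAlgebra.ι ℂ (v 0)) = v 0 (σ 0) := by
  have h : ιMulti ℂ 1 v = ExteriorAlgebra.ι ℂ (v 0) := by
    rw [ιMulti_apply]; simp [List.ofFn_succ]
  rw [← h, Ffun_ιMulti, Matrix.det_fin_one]
  rfl

lemma Ffun_mono3 (σ : Fin 3 → Fin 4) (v : Fin 3 → (Fin 4 → ℂ)) :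
    Ffun 3 σ (ExteriorAlgebra.ι ℂ (v 0) * ExteriorAlgebra.ι ℂ (v 1) * ExteriorAlgebra.ι ℂ (v 2)) =
      v 0 (σ 0) * v 1 (σ 1) * v 2 (σ 2) - v 0 (σ 0) * v 1 (σ 2) * v 2 (σ 1)
      - v 0 (σ 1) * v 1 (σ 0) * v 2 (σ 2) + v 0 (σ 1) * v 1 (σ 2) * v 2 (σ 0)
      + v 0 (σ 2) * v 1 (σ 0) * v 2 (σ 1) - v 0 (σ 2) * v 1 (σ 1) * v 2 (σ 0) := by
  have h : ιMulti ℂ 3 v =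
      ExteriorAlgebra.ι ℂ (v 0) * ExteriorAlgebra.ι ℂ (v 1) * ExteriorAlgebra.ι ℂ (v 2) := by
    rw [ιMulti_apply]; simp [List.ofFn_succ, mul_assoc]
  rw [← h, Ffun_ιMulti, Matrix.det_fin_three]
  ring_nf
  rfl

lemma Ffun_mono4 (v : Fin 4 → (Fin 4 → ℂ)) :
    Ffun 4 id (ExteriorAlgebra.ι ℂ (v 0) * ExteriorAlgebra.ι ℂ (v 1) *
      ExteriorAlgebra.ι ℂ (v 2) * ExteriorAlgebra.ι ℂ (v 3)) =
      Matrix.det (Matrix.of fun r c => v r c) := by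
  have h : ιMulti ℂ 4 v = ExteriorAlgebra.ι ℂ (v 0) * ExteriorAlgebra.ι ℂ (v 1) *
      ExteriorAlgebra.ι ℂ (v 2) * ExteriorAlgebra.ι ℂ (v 3) := by
    rw [ιMulti_apply]; simp [List.ofFn_succ, mul_assoc]
  rw [← h, Ffun_ιMulti]
  rfl

example : Ffun 2 ![0,2] (gFil 0 * gFil 2) = 1 := by
  have := Ffun_mono2 ![0,2] ![Pi.single 0 1, Pi.single 2 1]
  simp only [gFil]
  convert this using 2 <;> simp [Pi.single_apply, Fin.ext_iff]

lemma Ffun_g (σ : Fin 1 → Fin 4) (i : Fin 4) :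
    Ffun 1 σ (gFil i) = (if σ 0 = i then 1 else 0) := by
  have := Ffun_mono1 σ ![Pi.single i 1]
  simpa [gFil, Pi.single_apply] using this

lemma Ffun_gg (σ : Fin 2 → Fin 4) (i j : Fin 4) :
    Ffun 2 σ (gFil i * gFil j) =
      (if σ 0 = i then 1 else 0) * (if σ 1 = j then (1:ℂ) else 0)
      - (if σ 1 = i then 1 else 0) * (if σ 0 = j then 1 else 0) := by
  have := Ffun_mono2 σ ![Pi.single i 1, Pi.single j 1]
  simpa [gFil, Pi.single_apply] using this

lemma Ffun_ggg (σ : Fin 3 → Fin 4) (i j k : Fin 4) :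
    Ffun 3 σ (gFil i * gFil j * gFil k) =
      (if σ 0 = i then 1 else 0) * (if σ 1 = j then (1:ℂ) else 0) * (if σ 2 = k then 1 else 0)
      - (if σ 0 = i then 1 else 0) * (if σ 2 = j then 1 else 0) * (if σ 1 = k then 1 else 0)
      - (if σ 1 = i then 1 else 0) * (if σ 0 = j then 1 else 0) * (if σ 2 = k then 1 else 0)
      + (if σ 1 = i then 1 else 0) * (if σ 2 = j then 1 else 0) * (if σ 0 = k then 1 else 0)
      + (if σ 2 = i then 1 else 0) * (if σ 0 = j then 1 else 0) * (if σ 1 = k then 1 else 0)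
      - (if σ 2 = i then 1 else 0) * (if σ 1 = j then 1 else 0) * (if σ 0 = k then 1 else 0) := by
  have := Ffun_mono3 σ ![Pi.single i 1, Pi.single j 1, Pi.single k 1]
  simpa [gFil, Pi.single_apply] using this

lemma Ffun_gggg : Ffun 4 id (gFil 0 * gFil 1 * gFil 2 * gFil 3) = 1 := by
  have := Ffun_mono4 ![Pi.single 0 1, Pi.single 1 1, Pi.single 2 1, Pi.single 3 1]
  simp only [Matrix.cons_val_zero, Matrix.cons_val_one, Matrix.head_cons,
    Matrix.cons_val_two, Matrix.tail_cons, Matrix.cons_val_three] at this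
  rw [gFil, gFil, gFil, gFil, this]
  have h1 : (Matrix.of fun r c => (![Pi.single 0 1, Pi.single 1 1, Pi.single 2 1,
      Pi.single 3 1] : Fin 4 → Fin 4 → ℂ) r c) = (1 : Matrix (Fin 4) (Fin 4) ℂ) := by
    ext r c
    fin_cases r <;> fin_cases c <;> simp [Pi.single_apply, Matrix.one_apply, Matrix.vecHead, Matrix.vecTail]
  rw [h1, Matrix.det_one]

lemma gFil_ne (i : Fin 4) : gFil i ≠ 0 := by
  intro h
  have := congrArg (Ffun 1 ![i]) h
  simp [Ffun_g] at this

lemma g23_ne : gFil 2 * gFil 3 ≠ 0 := by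
  intro h
  have := congrArg (Ffun 2 ![2,3]) h
  simp [Ffun_gg] at this

lemma g023_ne : gFil 0 * gFil 2 * gFil 3 ≠ 0 := by
  intro h
  have := congrArg (Ffun 3 ![0,2,3]) h
  simp [Ffun_ggg] at this

lemma g0123_ne : gFil 0 * gFil 1 * gFil 2 * gFil 3 ≠ 0 := by
  intro h
  have := congrArg (Ffun 4 id) h
  simp [Ffun_gggg] at this

lemma one_ne : (1 : FilAlg) ≠ 0 := one_ne_zero

lemma li23 : LinearIndependent ℂ ![gFil 2, gFil 3] := by
  rw [Fintype.linearIndependent_iff]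
  intro g hg
  have h2 := congrArg (Ffun 1 ![2]) hg
  have h3 := congrArg (Ffun 1 ![3]) hg
  simp [Fin.sum_univ_two, Ffun_g] at h2 h3
  intro i; fin_cases i <;> simpa

lemma li11 : LinearIndependent ℂ
    ![gFil 0 * gFil 2, gFil 0 * gFil 3, gFil 1 * gFil 2, gFil 1 * gFil 3] := by
  rw [Fintype.linearIndependent_iff]
  intro g hg
  have h02 := congrArg (Ffun 2 ![0,2]) hg
  have h03 := congrArg (Ffun 2 ![0,3]) hg
  have h12 := congrArg (Ffun 2 ![1,2]) hg
  have h13 := congrArg (Ffun 2 ![1,3]) hg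
  simp [Fin.sum_univ_four, Ffun_gg] at h02 h03 h12 h13
  intro i; fin_cases i <;> simpa

lemma li21 : LinearIndependent ℂ ![gFil 0 * gFil 1 * gFil 2, gFil 0 * gFil 1 * gFil 3] := by
  rw [Fintype.linearIndependent_iff]
  intro g hg
  have h2 := congrArg (Ffun 3 ![0,1,2]) hg
  have h3 := congrArg (Ffun 3 ![0,1,3]) hg
  simp [Fin.sum_univ_two, Ffun_ggg] at h2 h3
  intro i; fin_cases i <;> simpa

lemma li12 : LinearIndependent ℂ ![gFil 0 * gFil 2 * gFil 3, gFil 1 * gFil 2 * gFil 3] := by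
  rw [Fintype.linearIndependent_iff]
  intro g hg
  have h2 := congrArg (Ffun 3 ![0,2,3]) hg
  have h3 := congrArg (Ffun 3 ![1,2,3]) hg
  simp [Fin.sum_univ_two, Ffun_ggg] at h2 h3
  intro i; fin_cases i <;> simpa

lemma span_pair_finrank {x y : FilAlg} (h : LinearIndependent ℂ ![x, y]) :
    finrank ℂ (span ℂ {x, y} : Submodule ℂ FilAlg) = 2 := by
  have hr : ({x, y} : Set FilAlg) = Set.range ![x, y] := by
    ext u
    simp [Matrix.range_cons, Matrix.range_empty]
    tauto
  rw [hr, finrank_span_eq_card h, Fintype.card_fin]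

lemma span_quad_finrank {x y z w : FilAlg} (h : LinearIndependent ℂ ![x, y, z, w]) :
    finrank ℂ (span ℂ {x, y, z, w} : Submodule ℂ FilAlg) = 4 := by
  have hr : ({x, y, z, w} : Set FilAlg) = Set.range ![x, y, z, w] := by
    ext u
    simp [Matrix.range_cons, Matrix.range_empty]
    tauto
  rw [hr, finrank_span_eq_card h, Fintype.card_fin]

lemma sq0 (i : Fin 4) : gFil i * gFil i = 0 := by
  rw [gFil]; exact ExteriorAlgebra.ι_sq_zero (R := ℂ) _

lemma gswap (i j : Fin 4) : gFil i * gFil j = -(gFil j * gFil i) := by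
  have h := ExteriorAlgebra.ι_sq_zero (R := ℂ) ((Pi.single i 1 + Pi.single j 1 : Fin 4 → ℂ))
  rw [map_add, add_mul, mul_add, mul_add] at h
  rw [show ExteriorAlgebra.ι ℂ ((Pi.single i 1 : Fin 4 → ℂ)) = gFil i from rfl,
    show ExteriorAlgebra.ι ℂ ((Pi.single j 1 : Fin 4 → ℂ)) = gFil j from rfl,
    sq0, sq0] at h
  linear_combination (norm := module) h

lemma z_xyy (x : FilAlg) (i : Fin 4) : (x * gFil i) * gFil i = 0 := by
  rw [mul_assoc, sq0, mul_zero]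

lemma z_iij (i j : Fin 4) : gFil i * (gFil i * gFil j) = 0 := by
  rw [← mul_assoc, sq0, zero_mul]

lemma z_iji (i j : Fin 4) : gFil i * gFil j * gFil i = 0 := by
  rw [mul_assoc, gswap j i, mul_neg, z_iij, neg_zero]

lemma z_mid (x y : FilAlg) (i : Fin 4) : (x * gFil i) * (gFil i * y) = 0 := by
  rw [mul_assoc x, ← mul_assoc (gFil i), sq0, zero_mul, mul_zero]

lemma z_032 : (gFil 0 * gFil 3) * gFil 2 = -(gFil 0 * gFil 2 * gFil 3) := by
  rw [mul_assoc, gswap 3 2, mul_neg, ← mul_assoc]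

example : AFil 1 (-1) = ⊥ := by norm_num [AFil]
example : AFil 3 0 = ⊥ := by norm_num [AFil]
example : AFil 1 0 = Submodule.span ℂ {gFil 0, gFil 1} := by norm_num [AFil]

lemma quot_rank (Z B : Submodule ℂ FilAlg) (hBZ : B ≤ Z) (hfin : FiniteDimensional ℂ Z) :
    finrank ℂ (↥Z ⧸ comap Z.subtype B) = finrank ℂ Z - finrank ℂ B := by
  have h1 : finrank ℂ (comap Z.subtype B) = finrank ℂ B :=
    (Submodule.comapSubtypeEquivOfLe hBZ).finrank_eq
  have h2 := Submodule.finrank_quotient_add_finrank (comap Z.subtype B)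
  omega


lemma Z_eq_of (mub delb : FilAlg →ₗ[ℂ] FilAlg) (p q : ℤ) (S : Set FilAlg)
    (hA : AFil p q = span ℂ S)
    (h1 : ∀ x ∈ S, mub x = 0)
    (h2 : ∀ x ∈ S, delb x ∈ (AFil (p + 1) (q - 1)).map mub) :
    ZFil mub delb p q = span ℂ S := by
  simp only [ZFil, hA]
  refine le_antisymm (inf_le_left.trans inf_le_left) ?_
  refine le_inf (le_inf le_rfl ?_) ?_ <;> rw [span_le] <;> intro x hx
  · exact LinearMap.mem_ker.mpr (h1 x hx)
  · exact h2 x hx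

lemma hFil_eq (mub delb : FilAlg →ₗ[ℂ] FilAlg) (p q : ℤ)
    (hle : BFil mub delb p q ≤ ZFil mub delb p q)
    (hfin : FiniteDimensional ℂ (ZFil mub delb p q)) :
    hFil mub delb p q =
      finrank ℂ (ZFil mub delb p q) - finrank ℂ (BFil mub delb p q) := by
  rw [hFil, quot_rank _ _ hle hfin]


set_option maxHeartbeats 2000000 in
/-- For the dual Chevalley–Eilenberg algebra of the filiform Lie algebra with its
non-integrable `J` (so `μ̄b = (1/2i)āb̄`, `∂̄b = (1/2i)(ab̄ - bā) - i aā`,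
`∂̄b̄ = -(1/2i)āb̄`, and `a, ā` closed), the Dolbeault cohomology has dimensions
`h^{0,0}=1, h^{1,0}=1, h^{2,0}=0, h^{0,1}=2, h^{1,1}=4, h^{2,1}=2, h^{0,2}=0,
h^{1,2}=1, h^{2,2}=1`. -/
theorem stmt_13 (mub delb : FilAlg →ₗ[ℂ] FilAlg)
    (hmub_deriv : ∀ p q : ℤ, ∀ x ∈ AFil p q, ∀ y : FilAlg,
      mub (x * y) = mub x * y + ((-1 : ℂ) ^ (p + q)) • (x * mub y))
    (hdelb_deriv : ∀ p q : ℤ, ∀ x ∈ AFil p q, ∀ y : FilAlg,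
      delb (x * y) = delb x * y + ((-1 : ℂ) ^ (p + q)) • (x * delb y))
    (hmub0 : mub (gFil 0) = 0)
    (hmub1 : mub (gFil 1) = (1 / (2 * Complex.I)) • (gFil 2 * gFil 3))
    (hmub2 : mub (gFil 2) = 0)
    (hmub3 : mub (gFil 3) = 0)
    (hdelb0 : delb (gFil 0) = 0)
    (hdelb1 : delb (gFil 1) =
      (1 / (2 * Complex.I)) • (gFil 0 * gFil 3 - gFil 1 * gFil 2)
        - Complex.I • (gFil 0 * gFil 2))
    (hdelb2 : delb (gFil 2) = 0)
    (hdelb3 : delb (gFil 3) = (-(1 / (2 * Complex.I))) • (gFil 2 * gFil 3)) :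
    hFil mub delb 0 0 = 1 ∧ hFil mub delb 1 0 = 1 ∧ hFil mub delb 2 0 = 0 ∧
    hFil mub delb 0 1 = 2 ∧ hFil mub delb 1 1 = 4 ∧ hFil mub delb 2 1 = 2 ∧
    hFil mub delb 0 2 = 0 ∧ hFil mub delb 1 2 = 1 ∧ hFil mub delb 2 2 = 1 := by
  set c : ℂ := 1 / (2 * Complex.I) with hc_def
  have hI : (2 * Complex.I) ≠ 0 := by simp [Complex.I_ne_zero]
  have hc : c ≠ 0 := one_div_ne_zero hI
  -- AFil values
  have hA00 : AFil 0 0 = span ℂ {(1 : FilAlg)} := by norm_num [AFil]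
  have hA10 : AFil 1 0 = span ℂ {gFil 0, gFil 1} := by norm_num [AFil]
  have hA01 : AFil 0 1 = span ℂ {gFil 2, gFil 3} := by norm_num [AFil]
  have hA20 : AFil 2 0 = span ℂ {gFil 0 * gFil 1} := by norm_num [AFil]
  have hA11 : AFil 1 1 = span ℂ {gFil 0 * gFil 2, gFil 0 * gFil 3,
      gFil 1 * gFil 2, gFil 1 * gFil 3} := by norm_num [AFil]
  have hA02 : AFil 0 2 = span ℂ {gFil 2 * gFil 3} := by norm_num [AFil]
  have hA21 : AFil 2 1 = span ℂ {gFil 0 * gFil 1 * gFil 2, gFil 0 * gFil 1 * gFil 3} := by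
    norm_num [AFil]
  have hA12 : AFil 1 2 = span ℂ {gFil 0 * gFil 2 * gFil 3, gFil 1 * gFil 2 * gFil 3} := by
    norm_num [AFil]
  have hA22 : AFil 2 2 = span ℂ {gFil 0 * gFil 1 * gFil 2 * gFil 3} := by norm_num [AFil]
  -- memberships
  have hm1 : (1 : FilAlg) ∈ AFil 0 0 := by rw [hA00]; exact subset_span rfl
  have hmg0 : gFil 0 ∈ AFil 1 0 := by rw [hA10]; exact subset_span (by simp)
  have hmg1 : gFil 1 ∈ AFil 1 0 := by rw [hA10]; exact subset_span (by simp)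
  have hmg2 : gFil 2 ∈ AFil 0 1 := by rw [hA01]; exact subset_span (by simp)
  have hmg01 : gFil 0 * gFil 1 ∈ AFil 2 0 := by rw [hA20]; exact subset_span rfl
  have hmg02 : gFil 0 * gFil 2 ∈ AFil 1 1 := by rw [hA11]; exact subset_span (by simp)
  have hmg12 : gFil 1 * gFil 2 ∈ AFil 1 1 := by rw [hA11]; exact subset_span (by simp)
  have hmg012 : gFil 0 * gFil 1 * gFil 2 ∈ AFil 2 1 := by rw [hA21]; exact subset_span (by simp)
  -- signs
  have hs10 : ((-1 : ℂ) ^ ((1 : ℤ) + 0)) = -1 := by norm_num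
  have hs01 : ((-1 : ℂ) ^ ((0 : ℤ) + 1)) = -1 := by norm_num
  have hs00 : ((-1 : ℂ) ^ ((0 : ℤ) + 0)) = 1 := by norm_num
  have hs20 : ((-1 : ℂ) ^ ((2 : ℤ) + 0)) = 1 := by norm_num
  have hs11 : ((-1 : ℂ) ^ ((1 : ℤ) + 1)) = 1 := by norm_num
  have hs21 : ((-1 : ℂ) ^ ((2 : ℤ) + 1)) = -1 := by norm_num
  -- values of mub
  have Mu1 : mub (1 : FilAlg) = 0 := by
    have h := hmub_deriv 0 0 1 hm1 1
    rw [hs00, one_mul, one_smul, one_mul, mul_one] at h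
    have := h.symm
    rw [← sub_eq_zero] at this
    simpa using this
  have De1 : delb (1 : FilAlg) = 0 := by
    have h := hdelb_deriv 0 0 1 hm1 1
    rw [hs00, one_mul, one_smul, one_mul, mul_one] at h
    have := h.symm
    rw [← sub_eq_zero] at this
    simpa using this
  have M01 : mub (gFil 0 * gFil 1) = (-c) • (gFil 0 * gFil 2 * gFil 3) := by
    rw [hmub_deriv 1 0 _ hmg0 _, hs10, hmub0, hmub1, zero_mul, zero_add, mul_smul_comm,
      ← mul_assoc]
    module
  have M02 : mub (gFil 0 * gFil 2) = 0 := by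
    rw [hmub_deriv 1 0 _ hmg0 _, hs10, hmub0, hmub2, zero_mul, mul_zero]
    simp
  have M03 : mub (gFil 0 * gFil 3) = 0 := by
    rw [hmub_deriv 1 0 _ hmg0 _, hs10, hmub0, hmub3, zero_mul, mul_zero]
    simp
  have M12 : mub (gFil 1 * gFil 2) = 0 := by
    rw [hmub_deriv 1 0 _ hmg1 _, hs10, hmub1, hmub2, mul_zero, smul_mul_assoc, z_iji]
    simp
  have M13 : mub (gFil 1 * gFil 3) = 0 := by
    rw [hmub_deriv 1 0 _ hmg1 _, hs10, hmub1, hmub3, mul_zero, smul_mul_assoc, z_xyy]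
    simp
  have M23 : mub (gFil 2 * gFil 3) = 0 := by
    rw [hmub_deriv 0 1 _ hmg2 _, hs01, hmub2, hmub3, zero_mul, mul_zero]
    simp
  have M012 : mub (gFil 0 * gFil 1 * gFil 2) = 0 := by
    rw [hmub_deriv 2 0 _ hmg01 _, hs20, M01, hmub2, mul_zero, smul_mul_assoc, mul_assoc,
      gswap 3 2, mul_neg, ← mul_assoc, z_xyy, zero_mul]
    simp
  have M013 : mub (gFil 0 * gFil 1 * gFil 3) = 0 := by
    rw [hmub_deriv 2 0 _ hmg01 _, hs20, M01, hmub3, mul_zero, smul_mul_assoc, z_xyy]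
    simp
  have M023 : mub (gFil 0 * gFil 2 * gFil 3) = 0 := by
    rw [hmub_deriv 1 1 _ hmg02 _, hs11, M02, hmub3, zero_mul, mul_zero]
    simp
  have M123 : mub (gFil 1 * gFil 2 * gFil 3) = 0 := by
    rw [hmub_deriv 1 1 _ hmg12 _, hs11, M12, hmub3, zero_mul, mul_zero]
    simp
  have M0123 : mub (gFil 0 * gFil 1 * gFil 2 * gFil 3) = 0 := by
    rw [hmub_deriv 2 1 _ hmg012 _, hs21, M012, hmub3, zero_mul, mul_zero]
    simp
  -- values of delb
  have D01 : delb (gFil 0 * gFil 1) = c • (gFil 0 * gFil 1 * gFil 2) := by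
    rw [hdelb_deriv 1 0 _ hmg0 _, hs10, hdelb0, hdelb1, zero_mul, zero_add, mul_sub, mul_smul_comm,
      mul_smul_comm, mul_sub, z_iij, zero_sub, z_iij, smul_zero, ← mul_assoc]
    module
  have D02 : delb (gFil 0 * gFil 2) = 0 := by
    rw [hdelb_deriv 1 0 _ hmg0 _, hs10, hdelb0, hdelb2, zero_mul, mul_zero]
    simp
  have D03 : delb (gFil 0 * gFil 3) = c • (gFil 0 * gFil 2 * gFil 3) := by
    rw [hdelb_deriv 1 0 _ hmg0 _, hs10, hdelb0, hdelb3, zero_mul, zero_add, mul_smul_comm,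
      ← mul_assoc]
    module
  have D12 : delb (gFil 1 * gFil 2) = (-c) • (gFil 0 * gFil 2 * gFil 3) := by
    rw [hdelb_deriv 1 0 _ hmg1 _, hs10, hdelb1, hdelb2, mul_zero, smul_zero, sub_mul,
      smul_mul_assoc, smul_mul_assoc, sub_mul, z_032, z_xyy, sub_zero, z_xyy, smul_zero]
    module
  have D13 : delb (gFil 1 * gFil 3) = (-Complex.I) • (gFil 0 * gFil 2 * gFil 3) := by
    rw [hdelb_deriv 1 0 _ hmg1 _, hs10, hdelb1, hdelb3, sub_mul, smul_mul_assoc, smul_mul_assoc,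
      sub_mul, z_xyy, zero_sub, mul_smul_comm]
    simp only [← mul_assoc]
    module
  have D23 : delb (gFil 2 * gFil 3) = 0 := by
    rw [hdelb_deriv 0 1 _ hmg2 _, hs01, hdelb2, hdelb3, zero_mul, mul_smul_comm, z_iij]
    simp
  have D012 : delb (gFil 0 * gFil 1 * gFil 2) = 0 := by
    rw [hdelb_deriv 2 0 _ hmg01 _, hs20, D01, hdelb2, mul_zero, smul_mul_assoc, z_xyy]
    simp
  have D013 : delb (gFil 0 * gFil 1 * gFil 3) = 0 := by
    rw [hdelb_deriv 2 0 _ hmg01 _, hs20, D01, hdelb3, smul_mul_assoc, mul_smul_comm]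
    simp only [← mul_assoc]
    module
  have D023 : delb (gFil 0 * gFil 2 * gFil 3) = 0 := by
    rw [hdelb_deriv 1 1 _ hmg02 _, hs11, D02, hdelb3, zero_mul, mul_smul_comm, z_mid]
    simp
  have D123 : delb (gFil 1 * gFil 2 * gFil 3) = 0 := by
    rw [hdelb_deriv 1 1 _ hmg12 _, hs11, D12, hdelb3, smul_mul_assoc, z_xyy, mul_smul_comm, z_mid]
    simp
  have D0123 : delb (gFil 0 * gFil 1 * gFil 2 * gFil 3) = 0 := by
    rw [hdelb_deriv 2 1 _ hmg012 _, hs21, D012, hdelb3, zero_mul, mul_smul_comm, z_mid]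
    simp
  -- kernel computations
  have hK10 : AFil 1 0 ⊓ LinearMap.ker mub = span ℂ {gFil 0} := by
    apply le_antisymm
    · intro x hx
      rw [Submodule.mem_inf, hA10, Submodule.mem_span_pair] at hx
      obtain ⟨⟨α, β, rfl⟩, hk⟩ := hx
      rw [LinearMap.mem_ker, map_add, map_smul, map_smul, hmub0, hmub1, smul_zero, zero_add,
        smul_smul] at hk
      have hβ : β * c = 0 := by
        by_contra hne
        exact (smul_ne_zero hne g23_ne) hk
      have hβ0 : β = 0 := by
        rcases mul_eq_zero.mp hβ with h | h
        · exact h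
        · exact absurd h hc
      rw [hβ0, zero_smul, add_zero]
      exact smul_mem _ _ (mem_span_singleton_self _)
    · refine le_inf ?_ ?_ <;> rw [span_le, Set.singleton_subset_iff]
      · rw [SetLike.mem_coe, hA10]; exact subset_span (by simp)
      · exact LinearMap.mem_ker.mpr hmub0
  have hK20 : AFil 2 0 ⊓ LinearMap.ker mub = ⊥ := by
    rw [eq_bot_iff]
    intro x hx
    rw [Submodule.mem_inf, hA20, mem_span_singleton] at hx
    obtain ⟨⟨γ, rfl⟩, hk⟩ := hx
    rw [LinearMap.mem_ker, map_smul, M01, smul_smul] at hk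
    have hγ : γ * (-c) = 0 := by
      by_contra hne
      exact (smul_ne_zero hne g023_ne) hk
    have hγ0 : γ = 0 := by
      rcases mul_eq_zero.mp hγ with h | h
      · exact h
      · exact absurd h (neg_ne_zero.mpr hc)
    rw [hγ0, zero_smul]
    exact zero_mem _
  have hKer01 : AFil 0 1 ⊓ LinearMap.ker mub = AFil 0 1 := by
    rw [inf_eq_left, hA10] at *
    rw [hA01, span_le]
    rintro x hx
    rcases hx with rfl | hx
    · exact LinearMap.mem_ker.mpr hmub2
    · rw [Set.mem_singleton_iff] at hx; subst hx
      exact LinearMap.mem_ker.mpr hmub3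
  have hKer11 : AFil 1 1 ⊓ LinearMap.ker mub = AFil 1 1 := by
    rw [inf_eq_left, hA11, span_le]
    rintro x hx
    simp only [Set.mem_insert_iff, Set.mem_singleton_iff] at hx
    rcases hx with rfl | rfl | rfl | rfl
    · exact LinearMap.mem_ker.mpr M02
    · exact LinearMap.mem_ker.mpr M03
    · exact LinearMap.mem_ker.mpr M12
    · exact LinearMap.mem_ker.mpr M13
  have hKer21 : AFil 2 1 ⊓ LinearMap.ker mub = AFil 2 1 := by
    rw [inf_eq_left, hA21, span_le]
    rintro x hx
    simp only [Set.mem_insert_iff, Set.mem_singleton_iff] at hx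
    rcases hx with rfl | rfl
    · exact LinearMap.mem_ker.mpr M012
    · exact LinearMap.mem_ker.mpr M013
  have hKer00 : AFil 0 0 ⊓ LinearMap.ker mub = AFil 0 0 := by
    rw [inf_eq_left, hA00, span_le]
    rintro x hx
    rw [Set.mem_singleton_iff] at hx; subst hx
    exact LinearMap.mem_ker.mpr Mu1
  -- case (0,0)
  have hZ00 : ZFil mub delb 0 0 = span ℂ {(1 : FilAlg)} := by
    apply Z_eq_of _ _ _ _ _ hA00
    · rintro x hx; rw [Set.mem_singleton_iff] at hx; subst hx; exact Mu1
    · rintro x hx; rw [Set.mem_singleton_iff] at hx; subst hx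
      rw [De1]; exact zero_mem _
  have hB00 : BFil mub delb 0 0 = ⊥ := by
    have h1 : AFil (0 + 1) (0 - 2) = ⊥ := by norm_num [AFil]
    have h2 : AFil 0 (0 - 1) = ⊥ := by norm_num [AFil]
    rw [BFil, h1, h2, Submodule.map_bot, bot_inf_eq, Submodule.map_bot, sup_bot_eq]
  have hfin00 : FiniteDimensional ℂ (ZFil mub delb 0 0) := by
    rw [hZ00]; exact FiniteDimensional.span_of_finite ℂ (Set.toFinite _)
  have h00 : hFil mub delb 0 0 = 1 := by
    rw [hFil_eq _ _ _ _ (by rw [hB00]; exact bot_le) hfin00, hZ00, hB00, finrank_bot,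
      finrank_span_singleton one_ne]
  -- case (1,0)
  have hZ10 : ZFil mub delb 1 0 = span ℂ {gFil 0} := by
    rw [ZFil, hK10, inf_eq_left]
    rw [span_le, Set.singleton_subset_iff]
    rw [SetLike.mem_coe, Submodule.mem_comap, hdelb0]
    exact zero_mem _
  have hB10 : BFil mub delb 1 0 = ⊥ := by
    have h1 : AFil (1 + 1) (0 - 2) = ⊥ := by norm_num [AFil]
    have h2 : AFil 1 (0 - 1) = ⊥ := by norm_num [AFil]
    rw [BFil, h1, h2, Submodule.map_bot, bot_inf_eq, Submodule.map_bot, sup_bot_eq]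
  have hfin10 : FiniteDimensional ℂ (ZFil mub delb 1 0) := by
    rw [hZ10]; exact FiniteDimensional.span_of_finite ℂ (Set.toFinite _)
  have h10 : hFil mub delb 1 0 = 1 := by
    rw [hFil_eq _ _ _ _ (by rw [hB10]; exact bot_le) hfin10, hZ10, hB10, finrank_bot,
      finrank_span_singleton (gFil_ne 0)]
  -- case (2,0)
  have hZ20 : ZFil mub delb 2 0 = ⊥ := by
    rw [ZFil, hK20, bot_inf_eq]
  have hB20 : BFil mub delb 2 0 = ⊥ := by
    have h1 : AFil (2 + 1) (0 - 2) = ⊥ := by norm_num [AFil]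
    have h2 : AFil 2 (0 - 1) = ⊥ := by norm_num [AFil]
    rw [BFil, h1, h2, Submodule.map_bot, bot_inf_eq, Submodule.map_bot, sup_bot_eq]
  have hfin20 : FiniteDimensional ℂ (ZFil mub delb 2 0) := by
    rw [hZ20]; infer_instance
  have h20 : hFil mub delb 2 0 = 0 := by
    rw [hFil_eq _ _ _ _ (by rw [hB20]; exact bot_le) hfin20, hZ20, hB20, finrank_bot]
  -- case (0,1)
  have hidx0111 : AFil (0 + 1) (1 - 1) = AFil 1 0 := by norm_num
  have hZ01 : ZFil mub delb 0 1 = span ℂ {gFil 2, gFil 3} := by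
    apply Z_eq_of _ _ _ _ _ hA01
    · rintro x hx
      simp only [Set.mem_insert_iff, Set.mem_singleton_iff] at hx
      rcases hx with rfl | rfl
      · exact hmub2
      · exact hmub3
    · rintro x hx
      simp only [Set.mem_insert_iff, Set.mem_singleton_iff] at hx
      rw [hidx0111]
      rcases hx with rfl | rfl
      · rw [hdelb2]; exact zero_mem _
      · rw [hdelb3]
        refine Submodule.mem_map.mpr ⟨-gFil 1, ?_, ?_⟩
        · rw [hA10]; exact neg_mem (subset_span (by simp))
        · rw [map_neg, hmub1]; module
  have hB01 : BFil mub delb 0 1 = ⊥ := by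
    have h1 : AFil (0 + 1) (1 - 2) = ⊥ := by norm_num [AFil]
    have h2 : AFil 0 (1 - 1) = AFil 0 0 := by norm_num
    rw [BFil, h1, h2, Submodule.map_bot, hKer00, hA00, Submodule.map_span, Set.image_singleton,
      De1, Submodule.span_zero_singleton, bot_sup_eq]
  have hfin01 : FiniteDimensional ℂ (ZFil mub delb 0 1) := by
    rw [hZ01]; exact FiniteDimensional.span_of_finite ℂ (Set.toFinite _)
  have h01 : hFil mub delb 0 1 = 2 := by
    rw [hFil_eq _ _ _ _ (by rw [hB01]; exact bot_le) hfin01, hZ01, hB01, finrank_bot,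
      span_pair_finrank li23]
  -- case (1,1)
  have hidx1111 : AFil (1 + 1) (1 - 1) = AFil 2 0 := by norm_num
  have hD13w : (-2 : ℂ) * (-c) = -Complex.I := by
    rw [hc_def]
    field_simp
    linear_combination Complex.I_sq
  have hZ11 : ZFil mub delb 1 1 = span ℂ {gFil 0 * gFil 2, gFil 0 * gFil 3,
      gFil 1 * gFil 2, gFil 1 * gFil 3} := by
    apply Z_eq_of _ _ _ _ _ hA11
    · rintro x hx
      simp only [Set.mem_insert_iff, Set.mem_singleton_iff] at hx
      rcases hx with rfl | rfl | rfl | rfl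
      · exact M02
      · exact M03
      · exact M12
      · exact M13
    · rintro x hx
      simp only [Set.mem_insert_iff, Set.mem_singleton_iff] at hx
      rw [hidx1111]
      rcases hx with rfl | rfl | rfl | rfl
      · rw [D02]; exact zero_mem _
      · rw [D03]
        refine Submodule.mem_map.mpr ⟨-(gFil 0 * gFil 1), ?_, ?_⟩
        · rw [hA20]; exact neg_mem (subset_span rfl)
        · rw [map_neg, M01]; module
      · rw [D12]
        refine Submodule.mem_map.mpr ⟨gFil 0 * gFil 1, ?_, ?_⟩
        · rw [hA20]; exact subset_span rfl
        · rw [M01]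
      · rw [D13]
        refine Submodule.mem_map.mpr ⟨(-2 : ℂ) • (gFil 0 * gFil 1), ?_, ?_⟩
        · rw [hA20]; exact smul_mem _ _ (subset_span rfl)
        · rw [map_smul, M01, smul_smul, hD13w]
  have hB11 : BFil mub delb 1 1 = ⊥ := by
    have h1 : AFil (1 + 1) (1 - 2) = ⊥ := by norm_num [AFil]
    have h2 : AFil 1 (1 - 1) = AFil 1 0 := by norm_num
    rw [BFil, h1, h2, Submodule.map_bot, hK10, Submodule.map_span, Set.image_singleton,
      hdelb0, Submodule.span_zero_singleton, bot_sup_eq]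
  have hfin11 : FiniteDimensional ℂ (ZFil mub delb 1 1) := by
    rw [hZ11]; exact FiniteDimensional.span_of_finite ℂ (Set.toFinite _)
  have h11 : hFil mub delb 1 1 = 4 := by
    rw [hFil_eq _ _ _ _ (by rw [hB11]; exact bot_le) hfin11, hZ11, hB11, finrank_bot,
      span_quad_finrank li11]
  -- case (2,1)
  have hZ21 : ZFil mub delb 2 1 = span ℂ {gFil 0 * gFil 1 * gFil 2,
      gFil 0 * gFil 1 * gFil 3} := by
    apply Z_eq_of _ _ _ _ _ hA21
    · rintro x hx
      simp only [Set.mem_insert_iff, Set.mem_singleton_iff] at hx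
      rcases hx with rfl | rfl
      · exact M012
      · exact M013
    · rintro x hx
      simp only [Set.mem_insert_iff, Set.mem_singleton_iff] at hx
      rcases hx with rfl | rfl
      · rw [D012]; exact zero_mem _
      · rw [D013]; exact zero_mem _
  have hB21 : BFil mub delb 2 1 = ⊥ := by
    have h1 : AFil (2 + 1) (1 - 2) = ⊥ := by norm_num [AFil]
    have h2 : AFil 2 (1 - 1) = AFil 2 0 := by norm_num
    rw [BFil, h1, h2, Submodule.map_bot, hK20, Submodule.map_bot, sup_bot_eq]
  have hfin21 : FiniteDimensional ℂ (ZFil mub delb 2 1) := by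
    rw [hZ21]; exact FiniteDimensional.span_of_finite ℂ (Set.toFinite _)
  have h21 : hFil mub delb 2 1 = 2 := by
    rw [hFil_eq _ _ _ _ (by rw [hB21]; exact bot_le) hfin21, hZ21, hB21, finrank_bot,
      span_pair_finrank li21]
  -- case (0,2)
  have hZ02 : ZFil mub delb 0 2 = span ℂ {gFil 2 * gFil 3} := by
    apply Z_eq_of _ _ _ _ _ hA02
    · rintro x hx
      rw [Set.mem_singleton_iff] at hx; subst hx
      exact M23
    · rintro x hx
      rw [Set.mem_singleton_iff] at hx; subst hx
      rw [D23]; exact zero_mem _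
  have hB02 : BFil mub delb 0 2 = span ℂ {gFil 2 * gFil 3} := by
    have h1 : AFil (0 + 1) (2 - 2) = AFil 1 0 := by norm_num
    have h2 : AFil 0 (2 - 1) = AFil 0 1 := by norm_num
    rw [BFil, h1, h2, hKer01, hA10, hA01, Submodule.map_span, Submodule.map_span,
      Set.image_insert_eq, Set.image_singleton, Set.image_insert_eq, Set.image_singleton,
      hmub0, hmub1, hdelb2, hdelb3, Submodule.span_insert_zero, Submodule.span_insert_zero,
      Submodule.span_singleton_smul_eq (Ne.isUnit hc) _,
      Submodule.span_singleton_smul_eq (Ne.isUnit (neg_ne_zero.mpr hc)) _, sup_idem]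
  have hfin02 : FiniteDimensional ℂ (ZFil mub delb 0 2) := by
    rw [hZ02]; exact FiniteDimensional.span_of_finite ℂ (Set.toFinite _)
  have h02 : hFil mub delb 0 2 = 0 := by
    rw [hFil_eq _ _ _ _ (by rw [hB02, hZ02]) hfin02, hZ02, hB02, Nat.sub_self]
  -- case (1,2)
  have hZ12 : ZFil mub delb 1 2 = span ℂ {gFil 0 * gFil 2 * gFil 3,
      gFil 1 * gFil 2 * gFil 3} := by
    apply Z_eq_of _ _ _ _ _ hA12
    · rintro x hx
      simp only [Set.mem_insert_iff, Set.mem_singleton_iff] at hx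
      rcases hx with rfl | rfl
      · exact M023
      · exact M123
    · rintro x hx
      simp only [Set.mem_insert_iff, Set.mem_singleton_iff] at hx
      rcases hx with rfl | rfl
      · rw [D023]; exact zero_mem _
      · rw [D123]; exact zero_mem _
  have hB12 : BFil mub delb 1 2 = span ℂ {gFil 0 * gFil 2 * gFil 3} := by
    have h1 : AFil (1 + 1) (2 - 2) = AFil 2 0 := by norm_num
    have h2 : AFil 1 (2 - 1) = AFil 1 1 := by norm_num
    have hpart1 : (AFil 2 0).map mub = span ℂ {gFil 0 * gFil 2 * gFil 3} := by
      rw [hA20, Submodule.map_span, Set.image_singleton, M01,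
        Submodule.span_singleton_smul_eq (Ne.isUnit (neg_ne_zero.mpr hc)) _]
    have hpart2 : (AFil 1 1).map delb ≤ span ℂ {gFil 0 * gFil 2 * gFil 3} := by
      rw [hA11, Submodule.map_span, span_le, Set.image_insert_eq, Set.image_insert_eq,
        Set.image_insert_eq, Set.image_singleton, D02, D03, D12, D13]
      rintro x hx
      simp only [Set.mem_insert_iff, Set.mem_singleton_iff] at hx
      rcases hx with rfl | rfl | rfl | rfl
      · exact zero_mem _
      · exact smul_mem _ _ (subset_span rfl)
      · exact smul_mem _ _ (subset_span rfl)
      · exact smul_mem _ _ (subset_span rfl)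
    rw [BFil, h1, h2, hKer11]
    refine le_antisymm (sup_le hpart1.le ?_) (le_sup_left.trans_eq' hpart1)
    exact hpart2
  have hfin12 : FiniteDimensional ℂ (ZFil mub delb 1 2) := by
    rw [hZ12]; exact FiniteDimensional.span_of_finite ℂ (Set.toFinite _)
  have h12 : hFil mub delb 1 2 = 1 := by
    have hle : BFil mub delb 1 2 ≤ ZFil mub delb 1 2 := by
      rw [hB12, hZ12]
      exact span_mono (by simp)
    rw [hFil_eq _ _ _ _ hle hfin12, hZ12, hB12, span_pair_finrank li12,
      finrank_span_singleton g023_ne]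
  -- case (2,2)
  have hZ22 : ZFil mub delb 2 2 = span ℂ {gFil 0 * gFil 1 * gFil 2 * gFil 3} := by
    apply Z_eq_of _ _ _ _ _ hA22
    · rintro x hx
      rw [Set.mem_singleton_iff] at hx; subst hx
      exact M0123
    · rintro x hx
      rw [Set.mem_singleton_iff] at hx; subst hx
      rw [D0123]; exact zero_mem _
  have hB22 : BFil mub delb 2 2 = ⊥ := by
    have h1 : AFil (2 + 1) (2 - 2) = ⊥ := by norm_num [AFil]
    have h2 : AFil 2 (2 - 1) = AFil 2 1 := by norm_num
    rw [BFil, h1, h2, Submodule.map_bot, hKer21, hA21, Submodule.map_span,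
      Set.image_insert_eq, Set.image_singleton, D012, D013, Submodule.span_insert_zero,
      Submodule.span_zero_singleton, bot_sup_eq]
  have hfin22 : FiniteDimensional ℂ (ZFil mub delb 2 2) := by
    rw [hZ22]; exact FiniteDimensional.span_of_finite ℂ (Set.toFinite _)
  have h22 : hFil mub delb 2 2 = 1 := by
    rw [hFil_eq _ _ _ _ (by rw [hB22]; exact bot_le) hfin22, hZ22, hB22, finrank_bot,
      finrank_span_singleton g0123_ne]
  exact ⟨h00, h10, h20, h01, h11, h21, h02, h12, h22⟩
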